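/- For every n ≥ 0, the number of (a-bc)-avoiding permutations of [n] equals the number of set partitions of [n] (the n-th Bell number B_n). -/

import Mathlib

open List Finset

section Aux
variable {α : Type*} [LinearOrder α]

def GoodL (l : List α) : Prop :=
  ∀ (i j : ℕ) (hj : j + 1 < l.length) (_ : i < j),
    ¬ (l[i]'(by omega) < l[j]'(by omega) ∧ l[j]'(by omega) < l[j+1]'hj)

lemma len_split (l₁ : List α) (m : α) (t : List α) :
    (l₁ ++ m :: t).length = l₁.length + t.length + 1 := by simp; omega

lemma key1 (l₁ : List α) (m : α) (t : List α) (k : ℕ) (h : k < l₁.length) :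
    (l₁ ++ m :: t)[k]'(by rw [len_split]; omega) = l₁[k]'h :=
  List.getElem_append_left h

lemma key2 (l₁ : List α) (m : α) (t : List α) (k : ℕ)
    (hk : k < (l₁ ++ m :: t).length) (h : k = l₁.length) :
    (l₁ ++ m :: t)[k]'hk = m := by
  subst h
  rw [List.getElem_append_right (le_refl _)]
  simp

lemma key3 (l₁ : List α) (m : α) (t : List α) (k : ℕ)
    (hk : k < (l₁ ++ m :: t).length) (h : l₁.length < k) :
    (l₁ ++ m :: t)[k]'hk = t[k - l₁.length - 1]'(by rw [len_split] at hk; omega) := by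
  rw [List.getElem_append_right (le_of_lt h), List.getElem_cons]
  rw [dif_neg (by omega)]

lemma goodL_append {l₁ : List α} {m : α} {t : List α}
    (h₁ : GoodL l₁) (hm : ∀ x ∈ l₁, m < x)
    (ht : t.Pairwise (· > ·)) : GoodL (l₁ ++ m :: t) := by
  intro i j hj hij hcon
  obtain ⟨h1, h2⟩ := hcon
  have hL := len_split l₁ m t
  rcases Nat.lt_trichotomy (j+1) l₁.length with hc | hc | hc
  · rw [key1 l₁ m t i (by omega), key1 l₁ m t j (by omega)] at h1
    rw [key1 l₁ m t j (by omega), key1 l₁ m t (j+1) (by omega)] at h2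
    exact h₁ i j (by omega) hij ⟨h1, h2⟩
  · rw [key2 l₁ m t (j+1) hj hc, key1 l₁ m t j (by omega)] at h2
    exact absurd h2 (not_lt_of_gt (hm _ (List.getElem_mem _)))
  · rcases Nat.lt_trichotomy j l₁.length with hc2 | hc2 | hc2
    · omega
    · rw [key2 l₁ m t j (by omega) hc2, key1 l₁ m t i (by omega)] at h1
      exact absurd h1 (not_lt_of_gt (hm _ (List.getElem_mem _)))
    · rw [key3 l₁ m t j (by omega) hc2] at h2
      rw [key3 l₁ m t (j+1) hj (by omega)] at h2
      have := (List.pairwise_iff_getElem.mp ht) (j - l₁.length - 1) (j + 1 - l₁.length - 1)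
        (by omega) (by omega) (by omega)
      exact absurd h2 (not_lt_of_gt this)

lemma goodL_prefix {l₁ l₂ : List α} (h : GoodL (l₁ ++ l₂)) : GoodL l₁ := by
  intro i j hj hij hcon
  have e : ∀ (k : ℕ) (hk : k < l₁.length),
      (l₁ ++ l₂)[k]'(by simp; omega) = l₁[k]'hk :=
    fun k hk => List.getElem_append_left hk
  refine h i j (by simp; omega) hij ?_
  rw [e i (by omega), e j (by omega), e (j+1) hj]
  exact hcon

lemma goodL_desc_suffix {l₁ : List α} {m : α} {t : List α}
    (h : GoodL (l₁ ++ m :: t)) (hm : ∀ x ∈ t, m < x) (hnd : t.Nodup) :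
    t.Pairwise (· > ·) := by
  rw [← List.isChain_iff_pairwise, List.isChain_iff_getElem]
  intro i hi
  by_contra hle
  push_neg at hle
  have hne : t[i] ≠ t[i+1] := by
    intro he
    exact absurd (List.nodup_iff_injective_getElem.mp hnd
      (show t[(⟨i, by omega⟩ : Fin t.length)] = t[(⟨i+1, by omega⟩ : Fin t.length)] from he))
      (by simp)
  have hlt : t[i] < t[i+1] := lt_of_le_of_ne hle hne
  have hL := len_split l₁ m t
  refine h l₁.length (l₁.length + 1 + i) (by omega) (by omega) ?_
  rw [key2 l₁ m t l₁.length (by omega) rfl, key3 l₁ m t (l₁.length+1+i) (by omega) (by omega),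
    key3 l₁ m t (l₁.length+1+i+1) (by omega) (by omega)]
  have e1 : l₁.length + 1 + i - l₁.length - 1 = i := by omega
  have e2 : l₁.length + 1 + i + 1 - l₁.length - 1 = i + 1 := by omega
  simp only [e1, e2]
  exact ⟨hm _ (List.getElem_mem _), hlt⟩


/-- the elements of `D` listed in decreasing order -/
def descL (D : Finset α) : List α := (D.sort (· ≤ ·)).reverse

lemma descL_pairwise (D : Finset α) : (descL D).Pairwise (· > ·) := by
  rw [descL, List.pairwise_reverse]
  exact D.sortedLT_sort.pairwise

lemma descL_nodup (D : Finset α) : (descL D).Nodup := by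
  rw [descL, List.nodup_reverse]; exact D.sort_nodup _

lemma descL_toFinset [DecidableEq α] (D : Finset α) : (descL D).toFinset = D := by
  rw [descL, List.toFinset_reverse, sort_toFinset]

lemma desc_unique [DecidableEq α] {t : List α} (ht : t.Pairwise (· > ·)) :
    t = descL t.toFinset := by
  have hnd : t.Nodup := ht.imp (fun h => (ne_of_gt h))
  refine (fun (hp : t.Perm (descL t.toFinset)) (h2 : t.Pairwise (· ≥ ·))
      (h3 : (descL t.toFinset).Pairwise (· ≥ ·)) =>
      List.Perm.eq_of_sortedGE h2.sortedGE h3.sortedGE hp) ?_ ?_ ?_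
  · exact (List.perm_of_nodup_nodup_toFinset_eq hnd (descL_nodup _)
      (by rw [descL_toFinset]))
  · exact ht.imp (fun h => le_of_lt h)
  · exact (descL_pairwise _).imp (fun h => le_of_lt h)

variable [DecidableEq α]

open scoped Classical in
noncomputable def avoF (S : Finset α) : Finset (List α) :=
  (S.sort (· ≤ ·)).permutations.toFinset.filter (fun l => GoodL l)

lemma mem_avoF {S : Finset α} {l : List α} :
    l ∈ avoF S ↔ l.Nodup ∧ l.toFinset = S ∧ GoodL l := by
  classical
  rw [avoF, Finset.mem_filter, List.mem_toFinset, List.mem_permutations]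
  constructor
  · rintro ⟨hp, hg⟩
    refine ⟨hp.nodup_iff.mpr (S.sort_nodup _), ?_, hg⟩
    ext x
    rw [List.mem_toFinset, hp.mem_iff, ← List.mem_toFinset, sort_toFinset]
  · rintro ⟨h1, h2, hg⟩
    exact ⟨List.perm_of_nodup_nodup_toFinset_eq h1 (S.sort_nodup _)
      (by rw [h2, sort_toFinset]), hg⟩

lemma append_cons_inj {m : α} : ∀ {l₁ l₁' t t' : List α},
    l₁ ++ m :: t = l₁' ++ m :: t' → m ∉ l₁ → m ∉ l₁' → l₁ = l₁' ∧ t = t'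
  | [], [], t, t', h, _, _ => by simpa using h
  | [], b :: l', t, t', h, h1, h2 => by
    simp only [List.nil_append, List.cons_append, List.cons.injEq] at h
    exact absurd (h.1 ▸ (show b ∈ b :: l' from List.mem_cons_self)) (by simpa [h.1] using h2)
  | a :: l, [], t, t', h, h1, h2 => by
    simp only [List.nil_append, List.cons_append, List.cons.injEq] at h
    exact absurd (h.1 ▸ (show a ∈ a :: l from List.mem_cons_self)) (by simpa [← h.1] using h1)
  | a :: l, b :: l', t, t', h, h1, h2 => by
    simp only [List.cons_append, List.cons.injEq] at h
    obtain ⟨rfl, h⟩ := h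
    obtain ⟨h3, h4⟩ := append_cons_inj h (fun hm => h1 (List.mem_cons_of_mem _ hm))
      (fun hm => h2 (List.mem_cons_of_mem _ hm))
    exact ⟨by rw [h3], h4⟩

lemma avoF_rec (S : Finset α) (hS : S.Nonempty) :
    avoF S = (S.erase (S.min' hS)).powerset.biUnion
      (fun D => (avoF ((S.erase (S.min' hS)) \ D)).image
        (fun l₁ => l₁ ++ (S.min' hS) :: descL D)) := by
  have hmS : S.min' hS ∈ S := S.min'_mem hS
  have hgt : ∀ x ∈ S, x ≠ S.min' hS → S.min' hS < x :=
    fun x hx hne => lt_of_le_of_ne (S.min'_le x hx) (Ne.symm hne)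
  ext l
  simp only [Finset.mem_biUnion, Finset.mem_image, Finset.mem_powerset, mem_avoF]
  constructor
  · rintro ⟨hnd, htf, hg⟩
    have hml : S.min' hS ∈ l := by rw [← List.mem_toFinset, htf]; exact hmS
    obtain ⟨k, hk, hkm⟩ := List.mem_iff_getElem.mp hml
    have hdec : l = l.take k ++ S.min' hS :: l.drop (k+1) := by
      conv_lhs => rw [← List.take_append_drop k l]
      rw [List.drop_eq_getElem_cons hk, hkm]
    have hnd' : (l.take k ++ S.min' hS :: l.drop (k+1)).Nodup := hdec ▸ hnd
    rw [List.nodup_append', List.nodup_cons] at hnd'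
    obtain ⟨hnd₁, ⟨hmt, hndt⟩, hdisj⟩ := hnd'
    have hml₁ : S.min' hS ∉ l.take k := fun hx => hdisj hx List.mem_cons_self
    have hmem : ∀ x, x ∈ l ↔ x ∈ S := by
      intro x
      rw [← htf, List.mem_toFinset]
    have hx : ∀ x, x ∈ S ↔ (x ∈ l.take k ∨ x = S.min' hS ∨ x ∈ l.drop (k+1)) := by
      intro x
      rw [← hmem]
      conv_lhs => rw [hdec]
      simp
    have hg' : GoodL (l.take k ++ S.min' hS :: l.drop (k+1)) := hdec ▸ hg
    have htpw : (l.drop (k+1)).Pairwise (· > ·) := by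
      refine goodL_desc_suffix hg' (fun x hxt => hgt x ((hx x).mpr (Or.inr (Or.inr hxt)))
        (fun he => hmt (he ▸ hxt))) hndt
    refine ⟨(l.drop (k+1)).toFinset, ?_, l.take k, ⟨hnd₁, ?_, goodL_prefix hg'⟩, ?_⟩
    · intro x hxD
      rw [List.mem_toFinset] at hxD
      rw [Finset.mem_erase]
      exact ⟨fun he => hmt (he ▸ hxD), (hx x).mpr (Or.inr (Or.inr hxD))⟩
    · ext x
      simp only [List.mem_toFinset, Finset.mem_sdiff, Finset.mem_erase]
      constructor
      · intro hxl
        exact ⟨⟨fun he => hml₁ (he ▸ hxl), (hx x).mpr (Or.inl hxl)⟩,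
          fun hxt => hdisj hxl (List.mem_cons_of_mem _ hxt)⟩
      · rintro ⟨⟨hne, hxS⟩, hnt⟩
        rcases (hx x).mp hxS with h | h | h
        · exact h
        · exact absurd h hne
        · exact absurd h hnt
    · rw [← desc_unique htpw]
      exact hdec.symm
  · rintro ⟨D, hD, l₁, ⟨hnd₁, htf₁, hg₁⟩, rfl⟩
    have hml₁ : ∀ x ∈ l₁, x ∈ S ∧ x ≠ S.min' hS ∧ x ∉ D := by
      intro x hxl
      have : x ∈ S.erase (S.min' hS) \ D := htf₁ ▸ List.mem_toFinset.mpr hxl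
      rw [Finset.mem_sdiff, Finset.mem_erase] at this
      exact ⟨this.1.2, this.1.1, this.2⟩
    have hmD : ∀ x ∈ D, x ∈ S ∧ x ≠ S.min' hS := by
      intro x hxD
      have := hD hxD
      rw [Finset.mem_erase] at this
      exact ⟨this.2, this.1⟩
    have hmnD : S.min' hS ∉ descL D := by
      rw [← List.mem_toFinset, descL_toFinset]
      exact fun h => (hmD _ h).2 rfl
    refine ⟨?_, ?_, goodL_append hg₁ (fun x hxl => hgt x (hml₁ x hxl).1 (hml₁ x hxl).2.1)
      (descL_pairwise D)⟩
    · rw [List.nodup_append', List.nodup_cons]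
      refine ⟨hnd₁, ⟨hmnD, descL_nodup D⟩, ?_⟩
      intro x hxl hxc
      rcases List.mem_cons.mp hxc with he | hm
      · exact (hml₁ x hxl).2.1 he
      · exact (hml₁ x hxl).2.2 (by rw [← descL_toFinset D]; exact List.mem_toFinset.mpr hm)
    · ext x
      simp only [List.toFinset_append, List.toFinset_cons, Finset.mem_union,
        Finset.mem_insert, htf₁, descL_toFinset]
      constructor
      · rintro (h | h | h)
        · exact (Finset.mem_erase.mp (Finset.mem_sdiff.mp h).1).2
        · exact h ▸ hmS
        · exact (hmD x h).1
      · intro hxS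
        by_cases he : x = S.min' hS
        · exact Or.inr (Or.inl he)
        · by_cases hd : x ∈ D
          · exact Or.inr (Or.inr hd)
          · exact Or.inl (Finset.mem_sdiff.mpr ⟨Finset.mem_erase.mpr ⟨he, hxS⟩, hd⟩)
def IsPartF (S : Finset α) (P : Finset (Finset α)) : Prop :=
  (∀ A ∈ P, A ⊆ S) ∧ (∀ A ∈ P, A.Nonempty) ∧
  (∀ A ∈ P, ∀ B ∈ P, A ≠ B → Disjoint A B) ∧ (∀ x ∈ S, ∃ A ∈ P, x ∈ A)

open scoped Classical in
noncomputable def parF (S : Finset α) : Finset (Finset (Finset α)) :=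
  S.powerset.powerset.filter (fun P => IsPartF S P)

lemma mem_parF {S : Finset α} {P : Finset (Finset α)} :
    P ∈ parF S ↔ IsPartF S P := by
  classical
  rw [parF, Finset.mem_filter, Finset.mem_powerset]
  exact ⟨fun h => h.2, fun h => ⟨fun A hA => Finset.mem_powerset.mpr (h.1 A hA), h⟩⟩

lemma parF_rec (S : Finset α) (hS : S.Nonempty) :
    parF S = (S.erase (S.min' hS)).powerset.biUnion
      (fun D => (parF ((S.erase (S.min' hS)) \ D)).image
        (fun P => insert (insert (S.min' hS) D) P)) := by
  have hmS : S.min' hS ∈ S := S.min'_mem hS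
  ext P
  simp only [Finset.mem_biUnion, Finset.mem_image, Finset.mem_powerset, mem_parF]
  constructor
  · rintro ⟨hsub, hne, hdisj, hcov⟩
    obtain ⟨B, hBP, hmB⟩ := hcov _ hmS
    refine ⟨B.erase (S.min' hS), ?_, P.erase B, ⟨?_, ?_, ?_, ?_⟩, ?_⟩
    · intro x hx
      rw [Finset.mem_erase] at hx ⊢
      exact ⟨hx.1, hsub B hBP hx.2⟩
    · intro A hA
      rw [Finset.mem_erase] at hA
      intro x hxA
      have hxB : x ∉ B := Finset.disjoint_left.mp (hdisj A hA.2 B hBP hA.1) hxA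
      rw [Finset.mem_sdiff, Finset.mem_erase]
      exact ⟨⟨fun he => hxB (he ▸ hmB), hsub A hA.2 hxA⟩,
        fun hc => hxB (Finset.mem_of_mem_erase hc)⟩
    · exact fun A hA => hne A (Finset.mem_of_mem_erase hA)
    · exact fun A hA B' hB' hne' =>
        hdisj A (Finset.mem_of_mem_erase hA) B' (Finset.mem_of_mem_erase hB') hne'
    · intro x hx
      rw [Finset.mem_sdiff, Finset.mem_erase] at hx
      obtain ⟨⟨hxm, hxS⟩, hxBe⟩ := hx
      have hxB : x ∉ B := fun hc => hxBe (Finset.mem_erase.mpr ⟨hxm, hc⟩)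
      obtain ⟨A, hAP, hxA⟩ := hcov x hxS
      exact ⟨A, Finset.mem_erase.mpr ⟨fun he => hxB (he ▸ hxA), hAP⟩, hxA⟩
    · rw [Finset.insert_erase hmB, Finset.insert_erase hBP]
  · rintro ⟨D, hD, P', ⟨hsub', hne', hdisj', hcov'⟩, rfl⟩
    have hmD : S.min' hS ∉ D := fun h => Finset.notMem_erase _ _ (hD h)
    have hnm : ∀ A ∈ P', S.min' hS ∉ A := by
      intro A hA hmA
      have := hsub' A hA hmA
      rw [Finset.mem_sdiff] at this
      exact Finset.notMem_erase _ _ this.1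
    have hnd : ∀ A ∈ P', Disjoint A (insert (S.min' hS) D) := by
      intro A hA
      rw [Finset.disjoint_left]
      intro x hxA hxB
      rcases Finset.mem_insert.mp hxB with he | hd
      · exact hnm A hA (he ▸ hxA)
      · have := hsub' A hA hxA
        rw [Finset.mem_sdiff] at this
        exact this.2 hd
    refine ⟨?_, ?_, ?_, ?_⟩
    · intro A hA
      rcases Finset.mem_insert.mp hA with rfl | hA'
      · intro x hx
        rcases Finset.mem_insert.mp hx with rfl | hd
        · exact hmS
        · exact Finset.mem_of_mem_erase (hD hd)
      · intro x hx
        have := hsub' A hA' hx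
        rw [Finset.mem_sdiff] at this
        exact Finset.mem_of_mem_erase this.1
    · intro A hA
      rcases Finset.mem_insert.mp hA with rfl | hA'
      · exact ⟨_, Finset.mem_insert_self _ _⟩
      · exact hne' A hA'
    · intro A hA B hB hne''
      rcases Finset.mem_insert.mp hA with rfl | hA' <;>
        rcases Finset.mem_insert.mp hB with rfl | hB'
      · exact absurd rfl hne''
      · exact (hnd B hB').symm
      · exact hnd A hA'
      · exact hdisj' A hA' B hB' hne''
    · intro x hx
      by_cases he : x = S.min' hS
      · exact ⟨_, Finset.mem_insert_self _ _, Finset.mem_insert.mpr (Or.inl he)⟩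
      · by_cases hd : x ∈ D
        · exact ⟨_, Finset.mem_insert_self _ _, Finset.mem_insert.mpr (Or.inr hd)⟩
        · obtain ⟨A, hAP, hxA⟩ := hcov' x (by
            rw [Finset.mem_sdiff, Finset.mem_erase]; exact ⟨⟨he, hx⟩, hd⟩)
          exact ⟨A, Finset.mem_insert_of_mem hAP, hxA⟩
lemma min_notmem_avo {S : Finset α} {l : List α} (h : l ∈ avoF S) {m : α}
    (hm : m ∉ S) : m ∉ l := by
  rw [mem_avoF] at h
  rw [← List.mem_toFinset, h.2.1]
  exact hm

lemma avoF_card_rec (S : Finset α) (hS : S.Nonempty) :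
    (avoF S).card =
      ∑ D ∈ (S.erase (S.min' hS)).powerset, (avoF ((S.erase (S.min' hS)) \ D)).card := by
  have hnm : ∀ D ∈ (S.erase (S.min' hS)).powerset, ∀ l₁ ∈ avoF ((S.erase (S.min' hS)) \ D),
      S.min' hS ∉ l₁ := by
    intro D _ l₁ hl₁
    exact min_notmem_avo hl₁ (by
      rw [Finset.mem_sdiff]
      exact fun hc => Finset.notMem_erase _ _ hc.1)
  rw [avoF_rec S hS, Finset.card_biUnion]
  · refine Finset.sum_congr rfl (fun D hD => ?_)
    apply Finset.card_image_of_injOn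
    intro l₁ h1 l₁' h1' he
    exact (append_cons_inj he (hnm D hD l₁ h1) (hnm D hD l₁' h1')).1
  · intro D hD D' hD' hne
    rw [Function.onFun, Finset.disjoint_left]
    rintro l hl hl'
    obtain ⟨l₁, h1, rfl⟩ := Finset.mem_image.mp hl
    obtain ⟨l₁', h1', he⟩ := Finset.mem_image.mp hl'
    obtain ⟨-, ht⟩ := append_cons_inj he.symm (hnm D hD l₁ h1) (hnm D' hD' l₁' h1')
    exact hne (by rw [← descL_toFinset (α := α) D, ← descL_toFinset (α := α) D', ht])


lemma parF_card_rec (S : Finset α) (hS : S.Nonempty) :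
    (parF S).card =
      ∑ D ∈ (S.erase (S.min' hS)).powerset, (parF ((S.erase (S.min' hS)) \ D)).card := by
  have hnm : ∀ (D : Finset α), ∀ P ∈ parF ((S.erase (S.min' hS)) \ D),
      ∀ A ∈ P, S.min' hS ∉ A := by
    intro D P hP A hA hmA
    have h := (mem_parF.mp hP).1 A hA hmA
    rw [Finset.mem_sdiff] at h
    exact Finset.notMem_erase _ _ h.1
  have hBne : ∀ (D : Finset α), ∀ P ∈ parF ((S.erase (S.min' hS)) \ D),
      insert (S.min' hS) D ∉ P := by
    intro D P hP hc
    exact hnm D P hP _ hc (Finset.mem_insert_self _ _)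
  rw [parF_rec S hS, Finset.card_biUnion]
  · refine Finset.sum_congr rfl (fun D hD => ?_)
    apply Finset.card_image_of_injOn
    intro P h1 P' h1' he
    have := congrArg (fun Q => Finset.erase Q (insert (S.min' hS) D)) he
    simpa [Finset.erase_insert (hBne D P h1), Finset.erase_insert (hBne D P' h1')]
      using this
  · intro D hD D' hD' hne
    rw [Function.onFun, Finset.disjoint_left]
    rintro Q hQ hQ'
    obtain ⟨P, h1, rfl⟩ := Finset.mem_image.mp hQ
    obtain ⟨P', h1', he⟩ := Finset.mem_image.mp hQ'
    have hmem : insert (S.min' hS) D ∈ insert (insert (S.min' hS) D') P' := by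
      rw [he]; exact Finset.mem_insert_self _ _
    rcases Finset.mem_insert.mp hmem with heq | hmem'
    · apply hne
      have hD1 : S.min' hS ∉ D := fun h => Finset.notMem_erase _ _ (Finset.mem_powerset.mp hD h)
      have hD2 : S.min' hS ∉ D' := fun h => Finset.notMem_erase _ _ (Finset.mem_powerset.mp hD' h)
      have := congrArg (fun B => Finset.erase B (S.min' hS)) heq
      simpa [Finset.erase_insert hD1, Finset.erase_insert hD2] using this
    · exact hnm D' P' h1' _ hmem' (Finset.mem_insert_self _ _)

lemma avoF_empty : (avoF (∅ : Finset α)) = {([] : List α)} := by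
  ext l
  rw [mem_avoF, Finset.mem_singleton]
  constructor
  · rintro ⟨-, h, -⟩
    rwa [List.toFinset_eq_empty_iff] at h
  · rintro rfl
    refine ⟨List.nodup_nil, by simp, ?_⟩
    intro i j hj hij
    simp at hj

lemma parF_empty : (parF (∅ : Finset α)) = {(∅ : Finset (Finset α))} := by
  ext P
  rw [mem_parF, Finset.mem_singleton]
  constructor
  · rintro ⟨hsub, hne, -, -⟩
    rw [Finset.eq_empty_iff_forall_notMem]
    intro A hA
    obtain ⟨x, hx⟩ := hne A hA
    exact absurd (hsub A hA hx) (Finset.notMem_empty x)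
  · rintro rfl
    exact ⟨by simp, by simp, by simp, by simp⟩

lemma count_eq (S : Finset α) : (avoF S).card = (parF S).card := by
  induction S using Finset.strongInduction with
  | _ S ih =>
    rcases S.eq_empty_or_nonempty with rfl | hS
    · rw [avoF_empty, parF_empty]
      simp
    · rw [avoF_card_rec S hS, parF_card_rec S hS]
      refine Finset.sum_congr rfl (fun D hD => ?_)
      apply ih
      refine Finset.ssubset_of_subset_of_ssubset (Finset.sdiff_subset) ?_
      exact Finset.erase_ssubset (S.min'_mem hS)
end Aux

/-- `π` avoids the pattern (a-bc): there are no (0-based) indices `i < j` with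
`j + 1 < n` and `π i < π j < π (j+1)`. -/
def AvoidsAdBC (n : ℕ) (π : Equiv.Perm (Fin n)) : Prop :=
  ∀ (i j : ℕ) (hi : i < n) (hj : j + 1 < n), i < j →
    ¬ (π ⟨i, hi⟩ < π ⟨j, Nat.lt_of_succ_lt hj⟩ ∧
       π ⟨j, Nat.lt_of_succ_lt hj⟩ < π ⟨j + 1, hj⟩)

/-- `P` is a set partition of `{1, …, n}` (realised as `Fin n`): a family of
pairwise disjoint non-empty subsets whose union is everything. -/
def IsSetPartition (n : ℕ) (P : Finset (Finset (Fin n))) : Prop :=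
  (∀ A ∈ P, A.Nonempty) ∧
  (∀ A ∈ P, ∀ B ∈ P, A ≠ B → Disjoint A B) ∧
  (∀ x : Fin n, ∃ A ∈ P, x ∈ A)

lemma goodL_ofFn_iff {n : ℕ} (π : Equiv.Perm (Fin n)) :
    GoodL (List.ofFn π) ↔ AvoidsAdBC n π := by
  constructor
  · intro h i j hi hj hij hcon
    refine h i j (by simpa using hj) hij ?_
    simpa [List.getElem_ofFn] using hcon
  · intro h i j hj hij hcon
    have hj' : j + 1 < n := by simpa using hj
    refine h i j (by omega) hj' hij ?_
    simpa [List.getElem_ofFn] using hcon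

/-- The number of (a-bc)-avoiding permutations of `[n]` is the `n`-th Bell number,
i.e. the number of set partitions of `[n]`. -/
theorem avoid_adbc_eq_bell (n : ℕ) :
    {π : Equiv.Perm (Fin n) | AvoidsAdBC n π}.ncard =
      {P : Finset (Finset (Fin n)) | IsSetPartition n P}.ncard := by
  classical
  have h1 : {π : Equiv.Perm (Fin n) | AvoidsAdBC n π} =
      ↑(Finset.univ.filter (fun π : Equiv.Perm (Fin n) => AvoidsAdBC n π)) := by
    ext π; simp
  have h2 : {P : Finset (Finset (Fin n)) | IsSetPartition n P} =
      ↑(parF (Finset.univ : Finset (Fin n))) := by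
    ext P
    simp only [Set.mem_setOf_eq, Finset.coe_sort_coe, Finset.mem_coe, mem_parF]
    constructor
    · rintro ⟨hne, hdisj, hcov⟩
      exact ⟨fun A _ => A.subset_univ, hne, hdisj, fun x _ => hcov x⟩
    · rintro ⟨hsub, hne, hdisj, hcov⟩
      exact ⟨hne, hdisj, fun x => hcov x (Finset.mem_univ x)⟩
  rw [h1, h2, Set.ncard_coe_finset, Set.ncard_coe_finset, ← count_eq]
  refine Finset.card_bij (fun π _ => List.ofFn π) ?_ ?_ ?_
  · intro π hπ
    rw [Finset.mem_filter] at hπ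
    rw [mem_avoF]
    refine ⟨List.nodup_ofFn.mpr π.injective, ?_, (goodL_ofFn_iff π).mpr hπ.2⟩
    ext x
    simp only [List.mem_toFinset, List.mem_ofFn, Finset.mem_univ, iff_true]
    exact ⟨π.symm x, π.apply_symm_apply x⟩
  · intro π₁ h₁ π₂ h₂ he
    have := List.ofFn_injective he
    exact Equiv.coe_fn_injective this
  · intro l hl
    obtain ⟨hnd, htf, hg⟩ := mem_avoF.mp hl
    have hlen : l.length = n := by
      rw [← List.toFinset_card_of_nodup hnd, htf, Finset.card_univ, Fintype.card_fin]
    have hf : Function.Injective (fun i : Fin n => l[(i : ℕ)]'(by rw [hlen]; exact i.2)) := by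
      intro i j hij
      have := List.nodup_iff_injective_getElem.mp hnd
        (show l[(⟨(i : ℕ), by rw [hlen]; exact i.2⟩ : Fin l.length)] =
          l[(⟨(j : ℕ), by rw [hlen]; exact j.2⟩ : Fin l.length)] from hij)
      simpa [Fin.ext_iff] using this
    refine ⟨Equiv.ofBijective _ (Finite.injective_iff_bijective.mp hf), Finset.mem_filter.mpr
      ⟨Finset.mem_univ _, ?_⟩, ?_⟩
    · rw [← goodL_ofFn_iff]
      have : List.ofFn ⇑(Equiv.ofBijective _ (Finite.injective_iff_bijective.mp hf)) = l := by
        apply List.ext_getElem (by simp [hlen])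
        intro i h1 h2
        simp [List.getElem_ofFn]
      rwa [this]
    · apply List.ext_getElem (by simp [hlen])
      intro i h1 h2
      simp [List.getElem_ofFn]
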